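/- Let E be a family of d-subsets of [n], let q, χ be positive integers with 1 ≤ q ≤ |E|-1 and χ ≤ min{|(∪_{i=1}^q e'_i)\e| : e, e'_1,...,e'_q distinct in E}, and let M be an (E,q,d+1,χ)-selector. Then for any hyperedge e* ∈ E and any q distinct hyperedges e'_1,...,e'_q ∈ E\{e*}, there exists a row index r of M such that M[r,j] = 0 for all j ∈ e*, and M[r,j] = 1 for some j ∈ (∪_{i=1}^q e'_i)\e*. Consequently, the non-adaptive strategy defined by M leaves at most q non-defective hyperedges undiscarded. -/
import Mathlib


/-- The `k` smallest elements of a finset of `Fin N`. -/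
def smallestK {N : ℕ} (s : Finset (Fin N)) (k : ℕ) : Finset (Fin N) :=
  ((s.sort (· ≤ ·)).take k).toFinset

/-- Let `M` be an `(E,q,d+1,χ)`-selector, where
`χ ≤ min{|(∪ᵢ e'ᵢ)\e| : e,e'_1,...,e'_q distinct in E}` and
`S_{e,(e'_1,...,e'_q),χ} = e ∪ {χ smallest elements of (∪ᵢ e'ᵢ)\e}`.  Then for any
`e* ∈ E` and any `q` distinct hyperedges of `E \ {e*}` (given as a `q`-subset `F`
of `E.erase e*`, with union `F.sup id`) there is a row `r` with `M[r,j] = 0` for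
all `j ∈ e*` and `M[r,j] = 1` for some `j ∈ (∪ F)\e*`; consequently at most `q`
non-defective hyperedges remain undiscarded. -/
theorem q_selector_discards (t n d q χ : ℕ) (hq : 1 ≤ q) (hχ : 0 < χ)
    (E : Finset (Finset (Fin n))) (hqE : q ≤ E.card - 1)
    (hEd : ∀ e ∈ E, e.card = d)
    (hχmin : ∀ e ∈ E, ∀ F ⊆ E.erase e, F.card = q → χ ≤ ((F.sup id) \ e).card)
    (M : Fin t → Fin n → Bool)
    (hsel : ∀ e ∈ E, ∀ F ⊆ E.erase e, F.card = q →
      ∃ J ⊆ e ∪ smallestK ((F.sup id) \ e) χ, d + 1 ≤ J.card ∧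
        ∀ j ∈ J, ∃ r : Fin t, M r j = true ∧
          ∀ j' ∈ e ∪ smallestK ((F.sup id) \ e) χ, j' ≠ j → M r j' = false) :
    (∀ estar ∈ E, ∀ F ⊆ E.erase estar, F.card = q →
      ∃ r : Fin t, (∀ j ∈ estar, M r j = false) ∧
        ∃ j ∈ (F.sup id) \ estar, M r j = true) ∧
    (∀ estar ∈ E, ∃ G ⊆ E.erase estar, G.card ≤ q ∧
      ∀ e' ∈ E.erase estar, e' ∉ G →
        ∃ r : Fin t, (∀ j ∈ estar, M r j = false) ∧ ∃ j ∈ e', M r j = true) := by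

  classical
  have smallestK_subset : ∀ (s : Finset (Fin n)) (k : ℕ), smallestK s k ⊆ s := by
    intro s k x hx
    simp only [smallestK, List.mem_toFinset] at hx
    exact (Finset.mem_sort _).mp (List.mem_of_mem_take hx)
  have key : ∀ estar ∈ E, ∀ F ⊆ E.erase estar, F.card = q →
      ∃ r : Fin t, (∀ j ∈ estar, M r j = false) ∧
        ∃ j ∈ (F.sup id) \ estar, M r j = true := by
    intro estar hestar F hF hFcard
    obtain ⟨J, hJsub, hJcard, hJrow⟩ := hsel estar hestar F hF hFcard
    have hcard : estar.card = d := hEd estar hestar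
    have hns : ¬ J ⊆ estar := by
      intro h
      have := Finset.card_le_card h
      omega
    obtain ⟨j, hjJ, hjne⟩ := Finset.not_subset.mp hns
    have hjmem : j ∈ smallestK ((F.sup id) \ estar) χ := by
      rcases Finset.mem_union.mp (hJsub hjJ) with h | h
      · exact absurd h hjne
      · exact h
    obtain ⟨r, hr1, hr2⟩ := hJrow j hjJ
    refine ⟨r, fun j' hj' => hr2 j' (Finset.mem_union_left _ hj')
      (fun h => hjne (h ▸ hj')), j, smallestK_subset _ _ hjmem, hr1⟩
  refine ⟨key, ?_⟩
  intro estar hestar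
  set P : Finset (Fin n) → Prop := fun e' =>
    ∃ r : Fin t, (∀ j ∈ estar, M r j = false) ∧ ∃ j ∈ e', M r j = true with hP
  set G := (E.erase estar).filter (fun e' => ¬ P e') with hG
  refine ⟨G, Finset.filter_subset _ _, ?_, ?_⟩
  · by_contra h
    push_neg at h
    obtain ⟨F, hFG, hFcard⟩ := Finset.exists_subset_card_eq h.le
    have hFsub : F ⊆ E.erase estar := hFG.trans (Finset.filter_subset _ _)
    obtain ⟨r, hr0, j, hj, hr1⟩ := key estar hestar F hFsub hFcard
    have hj' : j ∈ F.sup id := (Finset.mem_sdiff.mp hj).1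
    obtain ⟨e'', he''F, hje''⟩ := Finset.mem_sup.mp hj'
    have : ¬ P e'' := (Finset.mem_filter.mp (hFG he''F)).2
    exact this ⟨r, hr0, j, hje'', hr1⟩
  · intro e' he' heG
    by_contra hP'
    exact heG (Finset.mem_filter.mpr ⟨he', hP'⟩)
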